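/- Let G be a connected graph with at least two vertices. If G is bipartite then every vertex of G is a frontier vertex, i.e. F(G) = V(G); if G is not bipartite then G has no frontier vertices, i.e. F(G) = ∅. -/

import Mathlib

/-- An A-trail (alternating trail) in the mixed graph `(V, A)`: a sequence of `k ≥ 1`
pairwise distinct arcs `a 0, …, a (k-1)` of `G` with a vertex sequence
`v 0, …, v k` such that the `i`-th arc is `(v i, v (i+1))` or `(v (i+1), v i)`,
and consecutive arcs alternate in direction. -/
def IsATrail {V : Type*} (A : V → V → Prop) (k : ℕ) (a : ℕ → V × V) (v : ℕ → V) : Prop :=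
  1 ≤ k ∧
  (∀ i, i < k → A (a i).1 (a i).2) ∧
  (∀ i, i < k → ∀ j, j < k → a i = a j → i = j) ∧
  (∀ i, i < k → a i = (v i, v (i + 1)) ∨ a i = (v (i + 1), v i)) ∧
  (∀ i, i + 1 < k → (a i = (v i, v (i + 1)) ↔ a (i + 1) = (v (i + 2), v (i + 1))))

/-- The relation `R` on arcs: `x R y` iff some A-trail has first arc `x` and last arc `y`. -/
def ATrailRel {V : Type*} (A : V → V → Prop) (x y : V × V) : Prop :=
  ∃ k a v, IsATrail A k a v ∧ a 0 = x ∧ a (k - 1) = y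

/-- A frontier vertex: a vertex incident with two arcs lying in different classes of
the equivalence relation `ATrailRel`. -/
def IsFrontier {V : Type*} (A : V → V → Prop) (w : V) : Prop :=
  ∃ x y : V × V, A x.1 x.2 ∧ A y.1 y.2 ∧ (x.1 = w ∨ x.2 = w) ∧ (y.1 = w ∨ y.2 = w) ∧
    ¬ ATrailRel A x y

namespace ATP
variable {V : Type*}

def prep {α : Type*} (x : α) (a : ℕ → α) : ℕ → α
  | 0 => x
  | (i+1) => a i

@[simp] lemma prep_zero {α : Type*} (x : α) (a : ℕ → α) : prep x a 0 = x := rfl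
@[simp] lemma prep_succ {α : Type*} (x : α) (a : ℕ → α) (i : ℕ) : prep x a (i+1) = a i := rfl

lemma prep_isATrail {A : V → V → Prop} {k : ℕ} {a : ℕ → V × V} {v : ℕ → V}
    (h : IsATrail A k a v) {x : V × V} {u : V}
    (hx : A x.1 x.2) (hnew : ∀ i, i < k → a i ≠ x)
    (hform : x = (u, v 0) ∨ x = (v 0, u))
    (halt : x = (u, v 0) ↔ a 0 = (v 1, v 0)) :
    IsATrail A (k+1) (prep x a) (prep u v) := by
  obtain ⟨hk, hadj, hinj, hform', halt'⟩ := h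
  refine ⟨Nat.le_add_left 1 k, ?_, ?_, ?_, ?_⟩
  · rintro (_|i) hi
    · simpa using hx
    · exact hadj i (by omega)
  · rintro (_|i) hi (_|j) hj hij
    · rfl
    · simp only [prep_zero, prep_succ] at hij
      exact absurd hij.symm (hnew j (by omega))
    · simp only [prep_zero, prep_succ] at hij
      exact absurd hij (hnew i (by omega))
    · simp only [prep_succ] at hij
      exact congrArg Nat.succ (hinj i (by omega) j (by omega) hij)
  · rintro (_|i) hi
    · simpa using hform
    · simpa using hform' i (by omega)
  · rintro (_|i) hi
    · simpa using halt
    · simpa using halt' i (by omega)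

/-- single-arc A-trail: every arc is related to itself -/
lemma rel_self {A : V → V → Prop} {x : V × V} (hx : A x.1 x.2) : ATrailRel A x x := by
  refine ⟨1, fun _ => x, prep x.1 (fun _ => x.2), ⟨le_refl 1, ?_, ?_, ?_, ?_⟩, rfl, rfl⟩
  · intro i _; exact hx
  · intro i hi j hj _; omega
  · rintro (_|i) hi
    · left; rfl
    · omega
  · intro i hi; omega

def M (G : SimpleGraph V) : SimpleGraph (V × Bool) where
  Adj p q := G.Adj p.1 q.1 ∧ p.2 ≠ q.2
  symm := ⟨fun p q ⟨h1, h2⟩ => ⟨h1.symm, Ne.symm h2⟩⟩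
  loopless := ⟨fun p ⟨_, h2⟩ => h2 rfl⟩

lemma M_adj {G : SimpleGraph V} {p q : V × Bool} :
    (M G).Adj p q ↔ G.Adj p.1 q.1 ∧ p.2 ≠ q.2 := Iff.rfl

def arcEdge (x : V × V) : Sym2 (V × Bool) := s((x.1, false), (x.2, true))

def hasPort (x : V × V) (P : V × Bool) : Prop := P = (x.1, false) ∨ P = (x.2, true)

open SimpleGraph

lemma build {G : SimpleGraph V} {P Q : V × Bool} (p : (M G).Walk P Q) :
    p.IsPath → ∀ x y : V × V, G.Adj x.1 x.2 → G.Adj y.1 y.2 →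
    hasPort x P → hasPort y Q → x ≠ y →
    arcEdge x ∉ p.edges → arcEdge y ∉ p.edges →
    ∃ k a v, IsATrail G.Adj k a v ∧ a 0 = x ∧ a (k - 1) = y ∧
      (∀ i, i < k → a i = x ∨ a i = y ∨ arcEdge (a i) ∈ p.edges) ∧
      v 1 = P.1 ∧
      (P.2 = true → a 0 = (v 0, v 1)) ∧ (P.2 = false → a 0 = (v 1, v 0)) := by
  induction p with
  | nil =>
    rename_i R
    intro _ x y hx hy hpx hpy hxy _ _
    obtain ⟨P1, P2⟩ := R
    rcases hpx with h1 | h1 <;> rcases hpy with h2 | h2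
    · -- tail share: P1 = x.1 = y.1, P2 = false
      injection h1 with eP1 eP2
      subst eP1; subst eP2
      have e3 : x.1 = y.1 := by have := congrArg Prod.fst h2; exact this
      refine ⟨2, prep x (fun _ => y), prep x.2 (prep x.1 (fun _ => y.2)),
        ⟨by norm_num, ?_, ?_, ?_, ?_⟩, rfl, rfl, ?_, rfl, ?_, ?_⟩
      · rintro (_|i) _
        · exact hx
        · exact hy
      · rintro (_|i) hi (_|j) hj hij
        · rfl
        · simp only [prep_zero, prep_succ] at hij
          exact absurd hij hxy
        · simp only [prep_zero, prep_succ] at hij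
          exact absurd hij.symm hxy
        · omega
      · rintro (_|(_|i)) hi
        · right; rfl
        · left
          show y = (x.1, y.2)
          exact Prod.ext (e3.symm : y.1 = (x.1, y.2).1) rfl
        · omega
      · rintro (_|i) hi
        · constructor
          · intro hc
            have hc' : x = (x.2, x.1) := hc
            exact absurd (congrArg Prod.fst hc') hx.ne
          · intro hc
            have hc' : y = (y.2, x.1) := hc
            have : y.1 = y.2 := by
              have h5 := congrArg Prod.fst hc'
              rw [e3] at h5
              have h6 := congrArg Prod.snd hc'
              simp only [] at h5 h6
              rw [(h6 : y.2 = x.1)] at h5 ⊢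
              exact h5
            exact absurd this hy.ne
        · omega
      · rintro (_|(_|i)) hi
        · exact Or.inl rfl
        · exact Or.inr (Or.inl rfl)
        · omega
      · intro hc; exact absurd hc (by simp)
      · intro _
        show x = (x.1, x.2)
        exact Prod.ext rfl rfl
    · exact absurd (congrArg Prod.snd (h1.symm.trans h2)) (by simp)
    · exact absurd (congrArg Prod.snd (h1.symm.trans h2)) (by simp)
    · -- head share: P1 = x.2 = y.2, P2 = true
      injection h1 with eP1 eP2
      subst eP1; subst eP2
      have e3 : x.2 = y.2 := by have := congrArg Prod.fst h2; exact this
      refine ⟨2, prep x (fun _ => y), prep x.1 (prep x.2 (fun _ => y.1)),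
        ⟨by norm_num, ?_, ?_, ?_, ?_⟩, rfl, rfl, ?_, rfl, ?_, ?_⟩
      · rintro (_|i) _
        · exact hx
        · exact hy
      · rintro (_|i) hi (_|j) hj hij
        · rfl
        · simp only [prep_zero, prep_succ] at hij
          exact absurd hij hxy
        · simp only [prep_zero, prep_succ] at hij
          exact absurd hij.symm hxy
        · omega
      · rintro (_|(_|i)) hi
        · left
          show x = (x.1, x.2)
          exact Prod.ext rfl rfl
        · right
          show y = (y.1, x.2)
          exact Prod.ext rfl (e3.symm : y.2 = (y.1, x.2).2)
        · omega
      · rintro (_|i) hi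
        · constructor
          · intro _
            show y = (y.1, x.2)
            exact Prod.ext rfl (e3.symm : y.2 = (y.1, x.2).2)
          · intro _
            show x = (x.1, x.2)
            exact Prod.ext rfl rfl
        · omega
      · rintro (_|(_|i)) hi
        · exact Or.inl rfl
        · exact Or.inr (Or.inl rfl)
        · omega
      · intro _
        show x = (x.1, x.2)
        exact Prod.ext rfl rfl
      · intro hc; exact absurd hc (by simp)
  | cons h q ih =>
    rename_i R R' S
    intro hp x y hx hy hpx hpy hxy hex hey
    obtain ⟨P1, P2⟩ := R
    obtain ⟨P1', P2'⟩ := R'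
    have hq : q.IsPath := ((SimpleGraph.Walk.cons_isPath_iff h q).mp hp).1
    have hadj : G.Adj P1 P1' := h.1
    have hbb : P2 ≠ P2' := h.2
    have hnodup := hp.isTrail.edges_nodup
    rw [SimpleGraph.Walk.edges_cons] at hnodup
    have hey_q : arcEdge y ∉ q.edges := fun m => hey (by
      rw [SimpleGraph.Walk.edges_cons]; exact List.mem_cons_of_mem _ m)
    cases P2
    · -- P2 = false, so P2' = true
      have hP2' : P2' = true := by
        cases P2'
        · exact absurd rfl hbb
        · rfl
      subst hP2'
      have hz : G.Adj ((P1, P1') : V × V).1 ((P1, P1') : V × V).2 := hadj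
      have hze : arcEdge ((P1, P1') : V × V) = s(((P1, false) : V × Bool), (P1', true)) := rfl
      have hez_p : arcEdge ((P1, P1') : V × V) ∈ (SimpleGraph.Walk.cons h q).edges := by
        rw [SimpleGraph.Walk.edges_cons, hze]; exact List.mem_cons_self
      have hez_q : arcEdge ((P1, P1') : V × V) ∉ q.edges := by
        rw [hze]; exact (List.nodup_cons.mp hnodup).1
      have hzy : ((P1, P1') : V × V) ≠ y := fun e => hey (e ▸ hez_p)
      have hportz : hasPort (P1, P1') (P1', true) := Or.inr rfl
      obtain ⟨k, a, v, hT, ha0, halast, hmem, hv1, hor_t, -⟩ :=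
        ih hq (P1, P1') y hz hy hportz hpy hzy hez_q hey_q
      have ha0' : a 0 = (v 0, v 1) := hor_t rfl
      have hv0 : v 0 = P1 := (congrArg Prod.fst (ha0'.symm.trans ha0) : v 0 = P1)
      have hv1' : v 1 = P1' := hv1
      have hx1 : x.1 = P1 := by
        rcases hpx with h1 | h1
        · injection h1 with e _; exact e.symm
        · exact absurd (congrArg Prod.snd h1) (by simp)
      have hnew : ∀ i, i < k → a i ≠ x := by
        intro i hi e
        rcases hmem i hi with hh | hh | hh
        · exact hex (by rw [← e, hh]; exact hez_p)
        · exact hxy (e.symm.trans hh)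
        · rw [e] at hh
          exact hex (by rw [SimpleGraph.Walk.edges_cons]; exact List.mem_cons_of_mem _ hh)
      have hform : x = (x.2, v 0) ∨ x = (v 0, x.2) := by
        right; rw [hv0, ← hx1]
      have halt : x = (x.2, v 0) ↔ a 0 = (v 1, v 0) := by
        constructor
        · intro hc
          exact absurd (congrArg Prod.fst hc : x.1 = x.2) hx.ne
        · intro hc
          have e5 : ((v 1, v 0) : V × V) = (P1, P1') := hc.symm.trans ha0
          have e6 : P1' = P1 := hv1'.symm.trans (congrArg Prod.fst e5)
          rw [e6] at hadj
          exact absurd hadj (G.loopless.irrefl P1)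
      have hT' := prep_isATrail hT hx hnew hform halt
      refine ⟨k + 1, prep x a, prep x.2 v, hT', rfl, ?_, ?_, ?_, ?_, ?_⟩
      · have hk1 : k + 1 - 1 = (k - 1) + 1 := by have := hT.1; omega
        rw [hk1, prep_succ, halast]
      · rintro (_|i) hi
        · exact Or.inl rfl
        · rcases hmem i (Nat.lt_of_succ_lt_succ hi) with hh | hh | hh
          · right; right; rw [prep_succ, hh]; exact hez_p
          · right; left; rw [prep_succ, hh]
          · right; right; rw [prep_succ]
            rw [SimpleGraph.Walk.edges_cons]; exact List.mem_cons_of_mem _ hh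
      · show v 0 = P1
        exact hv0
      · intro hc; exact absurd hc (by simp)
      · intro _
        show x = (v 0, x.2)
        rw [hv0, ← hx1]
    · -- P2 = true, so P2' = false
      have hP2' : P2' = false := by
        cases P2'
        · rfl
        · exact absurd rfl hbb
      subst hP2'
      have hz : G.Adj ((P1', P1) : V × V).1 ((P1', P1) : V × V).2 := hadj.symm
      have hze : arcEdge ((P1', P1) : V × V) = s(((P1, true) : V × Bool), (P1', false)) :=
        Sym2.eq_swap
      have hez_p : arcEdge ((P1', P1) : V × V) ∈ (SimpleGraph.Walk.cons h q).edges := by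
        rw [SimpleGraph.Walk.edges_cons, hze]; exact List.mem_cons_self
      have hez_q : arcEdge ((P1', P1) : V × V) ∉ q.edges := by
        rw [hze]; exact (List.nodup_cons.mp hnodup).1
      have hzy : ((P1', P1) : V × V) ≠ y := fun e => hey (e ▸ hez_p)
      have hportz : hasPort (P1', P1) (P1', false) := Or.inl rfl
      obtain ⟨k, a, v, hT, ha0, halast, hmem, hv1, -, hor_f⟩ :=
        ih hq (P1', P1) y hz hy hportz hpy hzy hez_q hey_q
      have ha0' : a 0 = (v 1, v 0) := hor_f rfl
      have hv0 : v 0 = P1 := (congrArg Prod.snd (ha0'.symm.trans ha0) : v 0 = P1)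
      have hx2 : x.2 = P1 := by
        rcases hpx with h1 | h1
        · exact absurd (congrArg Prod.snd h1) (by simp)
        · injection h1 with e _; exact e.symm
      have hnew : ∀ i, i < k → a i ≠ x := by
        intro i hi e
        rcases hmem i hi with hh | hh | hh
        · exact hex (by rw [← e, hh]; exact hez_p)
        · exact hxy (e.symm.trans hh)
        · rw [e] at hh
          exact hex (by rw [SimpleGraph.Walk.edges_cons]; exact List.mem_cons_of_mem _ hh)
      have hformL : x = (x.1, v 0) := by rw [hv0, ← hx2]
      have hform : x = (x.1, v 0) ∨ x = (v 0, x.1) := Or.inl hformL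
      have halt : x = (x.1, v 0) ↔ a 0 = (v 1, v 0) := ⟨fun _ => ha0', fun _ => hformL⟩
      have hT' := prep_isATrail hT hx hnew hform halt
      refine ⟨k + 1, prep x a, prep x.1 v, hT', rfl, ?_, ?_, ?_, ?_, ?_⟩
      · have hk1 : k + 1 - 1 = (k - 1) + 1 := by have := hT.1; omega
        rw [hk1, prep_succ, halast]
      · rintro (_|i) hi
        · exact Or.inl rfl
        · rcases hmem i (Nat.lt_of_succ_lt_succ hi) with hh | hh | hh
          · right; right; rw [prep_succ, hh]; exact hez_p
          · right; left; rw [prep_succ, hh]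
          · right; right; rw [prep_succ]
            rw [SimpleGraph.Walk.edges_cons]; exact List.mem_cons_of_mem _ hh
      · show v 0 = P1
        exact hv0
      · intro _
        show x = (x.1, v 0)
        exact hformL
      · intro hc; exact absurd hc (by simp)


lemma adjustStart {G : SimpleGraph V} (x : V × V) (hx : G.Adj x.1 x.2) {Q : V × Bool}
    (p : (M G).Walk (x.2, true) Q) (hp : p.IsPath) :
    ∃ (Px : V × Bool) (q : (M G).Walk Px Q), q.IsPath ∧ hasPort x Px ∧
      arcEdge x ∉ q.edges ∧ ∀ e ∈ q.edges, e ∈ p.edges := by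
  by_cases hmem : arcEdge x ∈ p.edges
  · cases p with
    | nil => simp at hmem
    | cons h q =>
      rename_i R'
      rw [SimpleGraph.Walk.edges_cons] at hmem
      have hnodup := hp.isTrail.edges_nodup
      rw [SimpleGraph.Walk.edges_cons] at hnodup
      have hns : (x.2, true) ∉ q.support := ((SimpleGraph.Walk.cons_isPath_iff h q).mp hp).2
      rcases List.mem_cons.mp hmem with he | he
      · have hR' : R' = (x.1, false) := by
          rw [arcEdge, Sym2.eq_iff] at he
          rcases he with ⟨h1, h2⟩ | ⟨h1, h2⟩
          · exact absurd (congrArg Prod.snd h1) (by simp)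
          · exact h1.symm
        subst hR'
        refine ⟨(x.1, false), q, ((SimpleGraph.Walk.cons_isPath_iff h q).mp hp).1,
          Or.inl rfl, ?_, ?_⟩
        · intro m
          have he2 : arcEdge x = s(((x.2, true) : V × Bool), ((x.1, false) : V × Bool)) := he
          rw [he2] at m
          exact (List.nodup_cons.mp hnodup).1 m
        · intro e heq
          rw [SimpleGraph.Walk.edges_cons]
          exact List.mem_cons_of_mem _ heq
      · exfalso
        have he' : s(((x.2, true) : V × Bool), ((x.1, false) : V × Bool)) ∈ q.edges := by
          rw [Sym2.eq_swap]; exact he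
        exact hns (SimpleGraph.Walk.fst_mem_support_of_mem_edges q he')
  · exact ⟨(x.2, true), p, hp, Or.inr rfl, hmem, fun e he => he⟩

lemma rel_of_reachable {G : SimpleGraph V} {x y : V × V} (hx : G.Adj x.1 x.2)
    (hy : G.Adj y.1 y.2) (hxy : x ≠ y)
    (hreach : (M G).Reachable (x.2, true) (y.2, true)) :
    ATrailRel G.Adj x y := by
  classical
  obtain ⟨w⟩ := hreach
  obtain ⟨Px, p1, hp1, hportx, hex1, hsub1⟩ := adjustStart x hx w.toPath.val w.toPath.property
  obtain ⟨Py, p2, hp2, hporty, hey2, hsub2⟩ := adjustStart y hy p1.reverse hp1.reverse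
  have hex2 : arcEdge x ∉ p2.reverse.edges := by
    intro m
    rw [SimpleGraph.Walk.edges_reverse, List.mem_reverse] at m
    have := hsub2 _ m
    rw [SimpleGraph.Walk.edges_reverse, List.mem_reverse] at this
    exact hex1 this
  have hey2' : arcEdge y ∉ p2.reverse.edges := by
    rw [SimpleGraph.Walk.edges_reverse, List.mem_reverse]
    exact hey2
  obtain ⟨k, a, v, hT, h0, hl, -, -, -, -⟩ :=
    build p2.reverse hp2.reverse x y hx hy hportx hporty hxy hex2 hey2'
  exact ⟨k, a, v, hT, h0, hl⟩

lemma liftWalk {G : SimpleGraph V} {u w : V} (p : G.Walk u w) :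
    ∀ b, (M G).Reachable (u, b) (w, if Even p.length then b else !b) := by
  induction p with
  | nil =>
    intro b
    simp only [SimpleGraph.Walk.length_nil]
    norm_num
  | cons h q ih =>
    rename_i u' w' z
    intro b
    have hadj : (M G).Adj (u', b) (w', !b) := ⟨h, by simp⟩
    refine hadj.reachable.trans ?_
    have hI := ih (!b)
    rw [SimpleGraph.Walk.length_cons]
    by_cases he : Even q.length
    · simp only [he, if_true, Nat.even_add_one, not_true, if_false] at hI ⊢
      simpa using hI
    · simp only [he, if_false, Nat.even_add_one, not_false_iff, if_true] at hI ⊢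
      simpa using hI

lemma exists_flip {G : SimpleGraph V} (hconn : G.Connected)
    (hnb : ¬ (∃ C : V → Bool, ∀ u v, G.Adj u v → C u ≠ C v)) :
    ∃ u : V, (M G).Reachable (u, false) (u, true) := by
  classical
  by_contra hno
  push_neg at hno
  obtain ⟨u0⟩ := hconn.nonempty
  apply hnb
  refine ⟨fun u => decide ((M G).Reachable (u0, false) (u, true)), ?_⟩
  intro u v huv hCC
  simp only at hCC
  have htot : ∀ w : V, (M G).Reachable (u0, false) (w, false) ∨
      (M G).Reachable (u0, false) (w, true) := by
    intro w
    obtain ⟨q⟩ := hconn.preconnected u0 w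
    have := liftWalk q false
    by_cases he : Even q.length
    · left; simpa [he] using this
    · right; simpa [he] using this
  have hkey : ∀ w : V, ¬ ((M G).Reachable (u0, false) (w, false) ∧
      (M G).Reachable (u0, false) (w, true)) := by
    rintro w ⟨h1, h2⟩
    exact hno w (h1.symm.trans h2)
  by_cases hu : (M G).Reachable (u0, false) (u, true)
  · -- C u = true, so C v = true since equal
    have hv : (M G).Reachable (u0, false) (v, true) := by
      have : decide ((M G).Reachable (u0, false) (v, true)) = true := by
        rw [← hCC]; simp [hu]
      simpa using this
    have hadj : (M G).Adj (u, true) (v, false) := ⟨huv, by simp⟩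
    exact hkey v ⟨hu.trans hadj.reachable, hv⟩
  · have hv : ¬ (M G).Reachable (u0, false) (v, true) := by
      intro hvt
      apply hu
      have : decide ((M G).Reachable (u0, false) (u, true)) = true := by
        rw [hCC]; simp [hvt]
      simpa using this
    have hu' : (M G).Reachable (u0, false) (u, false) := (htot u).resolve_right hu
    have hadj : (M G).Adj (u, false) (v, true) := ⟨huv, by simp⟩
    exact hv (hu'.trans hadj.reachable)

lemma flip_all {G : SimpleGraph V} (hconn : G.Connected)
    (hnb : ¬ (∃ C : V → Bool, ∀ u v, G.Adj u v → C u ≠ C v)) :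
    ∀ (v : V) (b : Bool), (M G).Reachable (v, b) (v, !b) := by
  obtain ⟨u1, hu1⟩ := exists_flip hconn hnb
  have hflip : ∀ c : Bool, (M G).Reachable (u1, c) (u1, !c) := by
    intro c
    cases c
    · simpa using hu1
    · simpa using hu1.symm
  intro v b
  obtain ⟨q⟩ := hconn.preconnected v u1
  have h1 := liftWalk q b
  have h2 := liftWalk q.reverse (!(if Even q.length then b else !b))
  rw [SimpleGraph.Walk.length_reverse] at h2
  refine h1.trans ((hflip _).trans ?_)
  by_cases he : Even q.length
  · simp only [he, if_true] at h1 h2 ⊢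
    exact h2
  · simp only [he, if_false] at h1 h2 ⊢
    simpa using h2

lemma M_preconnected {G : SimpleGraph V} (hconn : G.Connected)
    (hnb : ¬ (∃ C : V → Bool, ∀ u v, G.Adj u v → C u ≠ C v)) :
    ∀ (P Q : V × Bool), (M G).Reachable P Q := by
  rintro ⟨u, b⟩ ⟨v, c⟩
  obtain ⟨q⟩ := hconn.preconnected u v
  have h1 := liftWalk q b
  by_cases hc : (if Even q.length then b else !b) = c
  · rw [hc] at h1; exact h1
  · have hgen : ∀ a c : Bool, a ≠ c → (!a) = c := by decide
    have : (!(if Even q.length then b else !b)) = c := hgen _ _ hc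
    rw [← this]
    exact h1.trans (flip_all hconn hnb _ _)

lemma color_const {A : V → V → Prop} {C : V → Bool} (hC : ∀ u v, A u v → C u ≠ C v)
    {k : ℕ} {a : ℕ → V × V} {v : ℕ → V} (h : IsATrail A k a v) :
    ∀ i, i < k → C (a i).1 = C (a 0).1 := by
  obtain ⟨hk, hadj, _, hform, halt⟩ := h
  intro i
  induction i with
  | zero => intro _; rfl
  | succ i ih =>
    intro hi
    have hi' : i < k := by omega
    have hii : i + 1 < k := hi
    have key : C (a (i+1)).1 = C (a i).1 := by
      rcases hform i hi' with hf | hb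
      · have hf2 : a (i+1) = (v (i+2), v (i+1)) := (halt i hii).mp hf
        have h1 : C (v i) ≠ C (v (i+1)) := by
          have h3 := hadj i hi'; rw [hf] at h3; exact hC _ _ h3
        have h2 : C (v (i+2)) ≠ C (v (i+1)) := by
          have h3 := hadj (i+1) hii; rw [hf2] at h3; exact hC _ _ h3
        rw [hf, hf2]
        have hgen : ∀ x y z : Bool, x ≠ z → y ≠ z → y = x := by decide
        exact hgen _ _ _ h1 h2
      · have hnf : a i ≠ (v i, v (i+1)) := by
          intro he
          have e1 : v (i+1) = v i := congrArg Prod.fst (hb.symm.trans he)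
          have h3 := hadj i hi'
          rw [hb] at h3
          exact hC _ _ h3 (congrArg C e1)
        have hnf2 : a (i+1) ≠ (v (i+2), v (i+1)) := fun he => hnf ((halt i hii).mpr he)
        have hf2 : a (i+1) = (v (i+1), v (i+2)) := (hform (i+1) hii).resolve_right hnf2
        rw [hb, hf2]
    rw [key]
    exact ih (by omega)

lemma rel_color {A : V → V → Prop} {C : V → Bool} (hC : ∀ u v, A u v → C u ≠ C v)
    {x y : V × V} (h : ATrailRel A x y) : C x.1 = C y.1 := by
  obtain ⟨k, a, v, hT, h0, hl⟩ := h
  have := color_const hC hT (k - 1) (by have := hT.1; omega)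
  rw [h0, hl] at this
  exact this.symm

lemma exists_neighbor {G : SimpleGraph V} (hconn : G.Connected)
    (hV : ∃ u v : V, u ≠ v) (w : V) : ∃ t, G.Adj w t := by
  obtain ⟨u, v, huv⟩ := hV
  have hz : ∃ z : V, z ≠ w := by
    by_cases h : u = w
    · exact ⟨v, fun e => huv (h.trans e.symm ▸ rfl : u = v)⟩
    · exact ⟨u, h⟩
  obtain ⟨z, hzw⟩ := hz
  obtain ⟨p⟩ := hconn.preconnected w z
  cases p with
  | nil => exact absurd rfl hzw
  | cons h q => exact ⟨_, h⟩

end ATP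

/-- for a connected graph `G` with at least two vertices: if `G` is
bipartite then every vertex is a frontier vertex, and if `G` is not bipartite then `G`
has no frontier vertices. -/
theorem stmt_10 {V : Type*} (G : SimpleGraph V) (hconn : G.Connected)
    (hV : ∃ u v : V, u ≠ v) :
    ((∃ C : V → Bool, ∀ u v, G.Adj u v → C u ≠ C v) →
      ∀ w : V, IsFrontier (fun s t => G.Adj s t) w) ∧
    (¬ (∃ C : V → Bool, ∀ u v, G.Adj u v → C u ≠ C v) →
      ∀ w : V, ¬ IsFrontier (fun s t => G.Adj s t) w) := by
  constructor
  · rintro ⟨C, hC⟩ w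
    obtain ⟨t, ht⟩ := ATP.exists_neighbor hconn hV w
    refine ⟨(w, t), (t, w), ht, ht.symm, Or.inl rfl, Or.inr rfl, ?_⟩
    intro hrel
    have := ATP.rel_color hC hrel
    exact hC w t ht this
  · intro hnb w
    rintro ⟨x, y, hx, hy, -, -, hn⟩
    apply hn
    by_cases hxy : x = y
    · subst hxy; exact ATP.rel_self hx
    · exact ATP.rel_of_reachable hx hy hxy
        (ATP.M_preconnected hconn hnb (x.2, true) (y.2, true))
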